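/- Let (T,X) be a semiflow on a metric space X which is topologically transitive and has a dense set of periodic points, and suppose there is a periodic point p ∈ X with X = orb(p). Then (T,X) is uniformly equicontinuous and is not eventually sensitive on initial conditions. -/

import Mathlib

/-- The orbit of a point under the action `φ`. -/
def Semiflow.orb {T X : Type*} (φ : T → X → X) (x : X) : Set X :=
  Set.range fun t => φ t x

/-- The fixer of a point: the set of monoid elements fixing it. -/
def Semiflow.fix {T X : Type*} (φ : T → X → X) (x : X) : Set T :=
  {t | φ t x = x}

/-- A subset `A` of `T` is syndetic if some compact `K ⊆ T` satisfies
`(t + K) ∩ A ≠ ∅` for every `t`. -/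
def Syndetic {T : Type*} [AddCommMonoid T] [TopologicalSpace T] (A : Set T) : Prop :=
  ∃ K : Set T, IsCompact K ∧ ∀ t : T, ∃ k ∈ K, t + k ∈ A

/-- A point is periodic if its fixer is syndetic (it is automatically a submonoid). -/
def Semiflow.Periodic {T X : Type*} [AddCommMonoid T] [TopologicalSpace T]
    (φ : T → X → X) (x : X) : Prop :=
  Syndetic (Semiflow.fix φ x)

/-- Topological transitivity. -/
def Semiflow.TopTrans {T X : Type*} [TopologicalSpace X] (φ : T → X → X) : Prop :=
  ∀ U V : Set X, IsOpen U → IsOpen V → U.Nonempty → V.Nonempty →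
    ∃ t : T, ((fun x => φ t x) '' U ∩ V).Nonempty

/-- Dense set of periodic points. -/
def Semiflow.DPP {T X : Type*} [AddCommMonoid T] [TopologicalSpace T] [TopologicalSpace X]
    (φ : T → X → X) : Prop :=
  Dense {x : X | Semiflow.Periodic φ x}

/-- Minimality: every orbit closure is the whole space. -/
def Semiflow.Minimal {T X : Type*} [TopologicalSpace X] (φ : T → X → X) : Prop :=
  ∀ y : X, closure (Semiflow.orb φ y) = Set.univ

/-- Sensitivity on initial conditions. -/
def Semiflow.Sensitive {T X : Type*} [PseudoMetricSpace X] (φ : T → X → X) : Prop :=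
  ∃ c > (0 : ℝ), ∀ x : X, ∀ ε > (0 : ℝ),
    ∃ y : X, dist x y < ε ∧ ∃ t : T, c ≤ dist (φ t x) (φ t y)

/-- Eventual sensitivity on initial conditions. -/
def Semiflow.EvSensitive {T X : Type*} [PseudoMetricSpace X] (φ : T → X → X) : Prop :=
  ∃ c > (0 : ℝ), ∀ x : X, ∀ ε > (0 : ℝ), ∃ t₀ t : T, ∃ y : X,
    dist (φ t₀ x) y < ε ∧ c ≤ dist (φ t (φ t₀ x)) (φ t y)

/-- Uniform equicontinuity of the semiflow. -/
def Semiflow.UnifEquicont {T X : Type*} [PseudoMetricSpace X] (φ : T → X → X) : Prop :=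
  ∀ ε > (0 : ℝ), ∃ δ > (0 : ℝ), ∀ x₁ x₂ : X, dist x₁ x₂ < δ →
    ∀ t : T, dist (φ t x₁) (φ t x₂) < ε

/-- First case of the dichotomy: if the space is a single periodic orbit, the
semiflow is uniformly equicontinuous and not eventually sensitive. -/
theorem unifEquicont_not_evSensitive_of_orbit_eq_univ
{T X : Type*} [AddCommMonoid T] [TopologicalSpace T] [ContinuousAdd T]
    [MetricSpace X]
    (hT : ¬ IsCompact (Set.univ : Set T))
    (φ : T → X → X)
    (hcont : Continuous fun p : T × X => φ p.1 p.2)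
    (hact : ∀ (s t : T) (x : X), φ s (φ t x) = φ (s + t) x)
    (hid : ∀ x : X, φ 0 x = x)
    (htt : Semiflow.TopTrans φ) (hdpp : Semiflow.DPP φ)
    (p : X) (hp : Semiflow.Periodic φ p)
    (hXorb : Semiflow.orb φ p = Set.univ) :
    Semiflow.UnifEquicont φ ∧ ¬ Semiflow.EvSensitive φ := by
  obtain ⟨K, hK, hsyn⟩ := hp
  -- every element fixing p fixes every point of X
  have hfix : ∀ a : T, φ a p = p → ∀ x : X, φ a x = x := by
    intro a ha x
    have hx : x ∈ Semiflow.orb φ p := by rw [hXorb]; trivial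
    obtain ⟨t, rfl⟩ := hx
    rw [hact, add_comm, ← hact, ha]
  -- every φ t has a left inverse φ k with k ∈ K
  have hinv : ∀ t : T, ∃ k ∈ K, ∀ x : X, φ k (φ t x) = x := by
    intro t
    obtain ⟨k, hk, hka⟩ := hsyn t
    refine ⟨k, hk, fun x => ?_⟩
    rw [hact]
    exact hfix _ (by have hka' : φ (t + k) p = p := hka; simpa [add_comm] using hka') x
  -- X is compact
  have hcX : CompactSpace X := by
    have hcontp : Continuous fun k : T => φ k p :=
      hcont.comp (continuous_id.prodMk continuous_const)
    have himg : IsCompact ((fun k : T => φ k p) '' K) := hK.image hcontp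
    have huniv : (fun k : T => φ k p) '' K = Set.univ := by
      apply Set.eq_univ_of_univ_subset
      intro x _
      have hx : x ∈ Semiflow.orb φ p := by rw [hXorb]; trivial
      obtain ⟨t, rfl⟩ := hx
      obtain ⟨k, hk, hkinv⟩ := hinv t
      obtain ⟨k', hk', hk'inv⟩ := hinv k
      refine ⟨k', hk', ?_⟩
      calc φ k' p = φ k' (φ k (φ t p)) := by rw [hkinv p]
        _ = φ t p := hk'inv _
    rw [huniv] at himg
    exact isCompact_univ_iff.mp himg
  -- key uniform injectivity estimate
  have key : ∀ ε > (0 : ℝ), ∃ δ > (0 : ℝ), ∀ k ∈ K, ∀ a b : X,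
      dist (φ k a) (φ k b) < δ → dist a b < ε := by
    intro ε hε
    set C : Set (T × X × X) := {q | q.1 ∈ K ∧ ε ≤ dist q.2.1 q.2.2} with hCdef
    have hCcomp : IsCompact C := by
      have h1 : IsCompact (K ×ˢ ((Set.univ : Set X) ×ˢ (Set.univ : Set X))) :=
        hK.prod (isCompact_univ.prod isCompact_univ)
      have h2 : IsClosed {q : T × X × X | ε ≤ dist q.2.1 q.2.2} :=
        isClosed_le continuous_const
          (Continuous.dist (continuous_fst.comp continuous_snd)
            (continuous_snd.comp continuous_snd))
      have : C = (K ×ˢ ((Set.univ : Set X) ×ˢ (Set.univ : Set X))) ∩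
          {q : T × X × X | ε ≤ dist q.2.1 q.2.2} := by
        ext q
        simp [hCdef, Set.mem_prod]
      rw [this]
      exact h1.inter_right h2
    have hfc : Continuous fun q : T × X × X => dist (φ q.1 q.2.1) (φ q.1 q.2.2) := by
      apply Continuous.dist
      · exact hcont.comp (continuous_fst.prodMk (continuous_fst.comp continuous_snd))
      · exact hcont.comp (continuous_fst.prodMk (continuous_snd.comp continuous_snd))
    by_cases hC : C.Nonempty
    · obtain ⟨q₀, hq₀, hmin⟩ := hCcomp.exists_isMinOn hC hfc.continuousOn
      refine ⟨dist (φ q₀.1 q₀.2.1) (φ q₀.1 q₀.2.2), ?_, ?_⟩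
      · rcases lt_or_eq_of_le (dist_nonneg (x := φ q₀.1 q₀.2.1) (y := φ q₀.1 q₀.2.2)) with h | h
        · exact h
        · exfalso
          have heq : φ q₀.1 q₀.2.1 = φ q₀.1 q₀.2.2 := by
            rw [← dist_eq_zero]; exact h.symm
          obtain ⟨k', _, hk'inv⟩ := hinv q₀.1
          have : q₀.2.1 = q₀.2.2 := by
            calc q₀.2.1 = φ k' (φ q₀.1 q₀.2.1) := (hk'inv _).symm
              _ = φ k' (φ q₀.1 q₀.2.2) := by rw [heq]
              _ = q₀.2.2 := hk'inv _
          have h2 := hq₀.2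
          rw [this, dist_self] at h2
          exact absurd (lt_of_lt_of_le hε h2) (lt_irrefl 0)
      · intro k hk a b hd
        by_contra hab
        push_neg at hab
        have hmem : ((k, a, b) : T × X × X) ∈ C := ⟨hk, hab⟩
        exact absurd (lt_of_le_of_lt (hmin hmem) hd) (lt_irrefl _)
    · refine ⟨1, one_pos, fun k hk a b _ => ?_⟩
      by_contra hab
      push_neg at hab
      exact hC ⟨(k, a, b), hk, hab⟩
  -- uniform equicontinuity
  have hueq : Semiflow.UnifEquicont φ := by
    intro ε hε
    obtain ⟨δ, hδ, hδ'⟩ := key ε hε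
    refine ⟨δ, hδ, fun x₁ x₂ hx t => ?_⟩
    obtain ⟨k, hk, hkinv⟩ := hinv t
    exact hδ' k hk (φ t x₁) (φ t x₂) (by rw [hkinv, hkinv]; exact hx)
  refine ⟨hueq, ?_⟩
  rintro ⟨c, hc, hES⟩
  obtain ⟨δ, hδ, hδ'⟩ := hueq c hc
  obtain ⟨t₀, t, y, hy, hsep⟩ := hES p δ hδ
  exact absurd (hδ' _ y hy t) (not_lt.mpr hsep)
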